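/- For α ≥ 0 and τ ∈ ℝ with σ := 1/√(1+τ²), ∫_0^α x·Φ(τx)·φ(x) dx = τ·σ·φ(0)·(Φ(α/σ) − 1/2) − (φ(α)·Φ(τα) − φ(0)/2). -/

import Mathlib

open MeasureTheory

/-- Standard normal pdf. -/
noncomputable def gpdf (x : ℝ) : ℝ := (Real.sqrt (2 * Real.pi))⁻¹ * Real.exp (-x ^ 2 / 2)

/-- Standard normal cdf. -/
noncomputable def gcdf (x : ℝ) : ℝ := ∫ t in Set.Iic x, gpdf t

lemma gpdf_cont : Continuous gpdf := by
  unfold gpdf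
  fun_prop

lemma gpdf_integrable : Integrable gpdf := by
  have h : Integrable (fun x : ℝ => Real.exp (-(1/2) * x ^ 2)) := integrable_exp_neg_mul_sq (by norm_num)
  have := h.const_mul (Real.sqrt (2 * Real.pi))⁻¹
  refine this.congr (Filter.Eventually.of_forall fun x => ?_)
  unfold gpdf; ring_nf

lemma gpdf_total : ∫ x : ℝ, gpdf x = 1 := by
  unfold gpdf
  rw [MeasureTheory.integral_const_mul]
  have : ∀ x : ℝ, Real.exp (-x ^ 2 / 2) = Real.exp (-(1/2) * x ^ 2) := fun x => by ring_nf
  simp_rw [this, integral_gaussian]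
  rw [inv_mul_eq_one₀ (by positivity)]
  congr 1
  ring

lemma gpdf_even (x : ℝ) : gpdf (-x) = gpdf x := by unfold gpdf; ring_nf

lemma gcdf_zero : gcdf 0 = 1 / 2 := by
  have h1 : gcdf 0 = ∫ x in Set.Ioi (0:ℝ), gpdf x := by
    unfold gcdf
    rw [show ∫ t in Set.Iic (0:ℝ), gpdf t = ∫ t in Set.Iic (0:ℝ), gpdf (-t) from by
      simp_rw [gpdf_even]]
    rw [integral_comp_neg_Iic]
    norm_num
  have h2 : gcdf 0 + ∫ x in Set.Ioi (0:ℝ), gpdf x = 1 := by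
    unfold gcdf
    rw [intervalIntegral.integral_Iic_add_Ioi gpdf_integrable.integrableOn gpdf_integrable.integrableOn,
      gpdf_total]
  rw [h1] at h2 ⊢
  linarith

lemma gcdf_hasDeriv (x : ℝ) : HasDerivAt gcdf (gpdf x) x := by
  have key : ∀ y : ℝ, gcdf y = gcdf 0 + ∫ t in (0:ℝ)..y, gpdf t := by
    intro y
    unfold gcdf
    rw [← intervalIntegral.integral_Iic_sub_Iic gpdf_integrable.integrableOn
      gpdf_integrable.integrableOn]
    ring
  have h : HasDerivAt (fun y => gcdf 0 + ∫ t in (0:ℝ)..y, gpdf t) (gpdf x) x := by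
    have := (intervalIntegral.integral_hasDerivAt_right (a := (0:ℝ)) (b := x)
      (gpdf_integrable.intervalIntegrable)
      (gpdf_integrable.aestronglyMeasurable.stronglyMeasurableAtFilter)
      gpdf_cont.continuousAt)
    exact (this.const_add (gcdf 0))
  exact h.congr_of_eventuallyEq (Filter.Eventually.of_forall key)

lemma gcdf_cont : Continuous gcdf :=
  continuous_iff_continuousAt.2 fun x => (gcdf_hasDeriv x).continuousAt

lemma gpdf_hasDeriv (x : ℝ) : HasDerivAt gpdf (-x * gpdf x) x := by
  unfold gpdf
  have h1 : HasDerivAt (fun x : ℝ => -x ^ 2 / 2) (-x) x := by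
    have : HasDerivAt (fun x : ℝ => x ^ 2) (2 * x) x := by
      simpa using hasDerivAt_pow 2 x
    have := (this.neg.div_const 2)
    exact this.congr_deriv (by ring)
  have h2 := (h1.exp).const_mul (Real.sqrt (2 * Real.pi))⁻¹
  exact h2.congr_deriv (by ring)

/-- For α ≥ 0, τ ∈ ℝ, σ = 1/√(1+τ²),
∫₀^α x·Φ(τx)·φ(x)dx = τσφ(0)(Φ(α/σ) − 1/2) − (φ(α)Φ(τα) − φ(0)/2). -/
theorem stmt14 (α τ : ℝ) (hα : 0 ≤ α) :
    let σ : ℝ := 1 / Real.sqrt (1 + τ ^ 2)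
    (∫ x in (0 : ℝ)..α, x * gcdf (τ * x) * gpdf x) =
      τ * σ * gpdf 0 * (gcdf (α / σ) - 1 / 2) - (gpdf α * gcdf (τ * α) - gpdf 0 / 2) := by
  intro σ
  have hs : Real.sqrt (1 + τ ^ 2) > 0 := Real.sqrt_pos.2 (by positivity)
  have hσ : σ > 0 := by positivity
  have hσsq : σ ^ 2 * (1 + τ ^ 2) = 1 := by
    simp only [σ, div_pow, one_pow, Real.sq_sqrt (by positivity : (0:ℝ) ≤ 1 + τ ^ 2)]
    field_simp
  -- key pdf product identity
  have key : ∀ x : ℝ, gpdf x * gpdf (τ * x) = gpdf 0 * gpdf (x / σ) := by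
    intro x
    unfold gpdf
    rw [show (-x ^ 2 / 2) = -x^2/2 from rfl]
    have hexp : Real.exp (-x ^ 2 / 2) * Real.exp (-(τ * x) ^ 2 / 2)
        = Real.exp (-(0:ℝ) ^ 2 / 2) * Real.exp (-(x / σ) ^ 2 / 2) := by
      rw [← Real.exp_add, ← Real.exp_add]
      congr 1
      have : (x / σ) ^ 2 = x ^ 2 * (1 + τ ^ 2) := by
        rw [div_pow, div_eq_iff (by positivity : σ ^ 2 ≠ 0)]
        nlinarith [hσsq]
      rw [this]; ring
    calc (Real.sqrt (2 * Real.pi))⁻¹ * Real.exp (-x ^ 2 / 2) *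
          ((Real.sqrt (2 * Real.pi))⁻¹ * Real.exp (-(τ * x) ^ 2 / 2))
        = (Real.sqrt (2 * Real.pi))⁻¹ * (Real.sqrt (2 * Real.pi))⁻¹ *
          (Real.exp (-x ^ 2 / 2) * Real.exp (-(τ * x) ^ 2 / 2)) := by ring
      _ = (Real.sqrt (2 * Real.pi))⁻¹ * (Real.sqrt (2 * Real.pi))⁻¹ *
          (Real.exp (-(0:ℝ) ^ 2 / 2) * Real.exp (-(x / σ) ^ 2 / 2)) := by rw [hexp]
      _ = _ := by ring
  set F : ℝ → ℝ := fun x => -(gpdf x * gcdf (τ * x)) + τ * σ * gpdf 0 * gcdf (x / σ) with hF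
  have hderiv : ∀ x ∈ Set.uIcc (0:ℝ) α, HasDerivAt F (x * gcdf (τ * x) * gpdf x) x := by
    intro x _
    have hm : HasDerivAt (fun y : ℝ => τ * y) τ x := by
      simpa using (hasDerivAt_id x).const_mul τ
    have hd : HasDerivAt (fun y : ℝ => y / σ) (1 / σ) x := by
      simpa using (hasDerivAt_id x).div_const σ
    have h1 : HasDerivAt (fun x => gpdf x * gcdf (τ * x))
        (-x * gpdf x * gcdf (τ * x) + gpdf x * (gpdf (τ * x) * τ)) x :=
      (gpdf_hasDeriv x).mul ((gcdf_hasDeriv (τ * x)).comp x hm)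
    have h2 : HasDerivAt (fun x => gcdf (x / σ)) (gpdf (x / σ) * (1 / σ)) x :=
      HasDerivAt.comp (h₂ := gcdf) x (gcdf_hasDeriv (x / σ)) hd
    have h3 := h1.neg.add ((h2.const_mul (τ * σ * gpdf 0)))
    refine h3.congr_deriv ?_
    have hk := key x
    have hσ' : σ ≠ 0 := ne_of_gt hσ
    have e : σ * (1 / σ) = 1 := mul_one_div_cancel hσ'
    clear_value F σ
    linear_combination -(τ * hk) + τ * gpdf 0 * gpdf (x / σ) * e
  have hcont : ContinuousOn (fun x => x * gcdf (τ * x) * gpdf x) (Set.uIcc (0:ℝ) α) := by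
    apply Continuous.continuousOn
    exact (continuous_id.mul (gcdf_cont.comp (continuous_const.mul continuous_id))).mul gpdf_cont
  have := intervalIntegral.integral_eq_sub_of_hasDerivAt hderiv
    (hcont.intervalIntegrable)
  rw [this, hF]
  simp only [mul_zero, zero_div, gcdf_zero]
  ring
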